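/- Let p be an odd prime and let (G,∘) be a cyclic group of order pⁿ for some n ≥ 1. Then for every group operation · on G such that (G,·,∘) is a skew brace, every subgroup of (G,∘) is a left ideal of (G,·,∘). -/

import Mathlib

def IsSkewBrace {G : Type*} (dot circ : Group G) : Prop :=
  ∀ σ τ κ : G,
    circ.mul σ (dot.mul τ κ) =
      dot.mul (dot.mul (circ.mul σ τ) (dot.inv σ)) (circ.mul σ κ)

def gammaFun {G : Type*} (dot circ : Group G) (σ τ : G) : G :=
  dot.mul (dot.inv σ) (circ.mul σ τ)

def IsSubgroupOf {G : Type*} (S : Group G) (H : Set G) : Prop :=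
  S.one ∈ H ∧ (∀ a ∈ H, ∀ b ∈ H, S.mul a b ∈ H) ∧ (∀ a ∈ H, S.inv a ∈ H)

def IsLeftIdeal {G : Type*} (dot circ : Group G) (H : Set G) : Prop :=
  IsSubgroupOf dot H ∧ ∀ σ : G, ∀ τ ∈ H, gammaFun dot circ σ τ ∈ H

def IsStrongLeftIdeal {G : Type*} (dot circ : Group G) (H : Set G) : Prop :=
  IsLeftIdeal dot circ H ∧
    ∀ σ : G, ∀ τ ∈ H, dot.mul (dot.mul σ τ) (dot.inv σ) ∈ H

def IsCharacteristicSubgroupOf {G : Type*} (S : Group G) (H : Set G) : Prop :=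
  IsSubgroupOf S H ∧
    ∀ f : G ≃ G, (∀ a b : G, f (S.mul a b) = S.mul (f a) (f b)) → ∀ a ∈ H, f a ∈ H

def oppGroup {G : Type*} (dot : Group G) : Group G :=
  letI := dot
  { mul := fun a b => b * a
    one := (1 : G)
    inv := fun a => a⁻¹
    npow := fun n x => @npowRec G ⟨(1 : G)⟩ ⟨fun a b => b * a⟩ n x
    npow_zero := fun _ => rfl
    npow_succ := fun _ _ => rfl
    div := fun a b => b⁻¹ * a
    zpow := fun n x => @zpowRec G ⟨(1 : G)⟩ ⟨fun a b => b * a⟩ ⟨fun a => a⁻¹⟩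
      (fun n x => @npowRec G ⟨(1 : G)⟩ ⟨fun a b => b * a⟩ n x) n x
    zpow_zero' := fun _ => rfl
    zpow_succ' := fun _ _ => rfl
    zpow_neg' := fun _ _ => rfl
    div_eq_mul_inv := fun _ _ => rfl
    mul_assoc := fun a b c => (mul_assoc c b a).symm
    one_mul := fun a => mul_one a
    mul_one := fun a => one_mul a
    inv_mul_cancel := fun a => mul_inv_cancel a }

def lam {G : Type*} (S : Group G) (σ : G) : Equiv.Perm G :=
  letI := S; Equiv.mulLeft σ

def rho {G : Type*} (S : Group G) (σ : G) : Equiv.Perm G :=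
  letI := S; Equiv.mulRight σ⁻¹


namespace SB18

variable {G : Type*}

lemma grp_one_mul (S : Group G) : ∀ t : G, S.mul S.one t = t := by
  letI := S; exact fun t => one_mul t

lemma grp_mul_assoc (S : Group G) :
    ∀ a b c : G, S.mul (S.mul a b) c = S.mul a (S.mul b c) := by
  letI := S; exact fun a b c => mul_assoc a b c

lemma grp_inv_mul (S : Group G) : ∀ t : G, S.mul (S.inv t) t = S.one := by
  letI := S; exact fun t => inv_mul_cancel t

lemma grp_inv_of (S : Group G) (a w : G) (h : S.mul a w = S.one) : S.inv a = w := by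
  letI := S
  have h' : a * w = 1 := h
  exact inv_eq_of_mul_eq_one_right h'

section Gamma
variable (dot circ : Group G)

lemma circ_mul_one (hsb : IsSkewBrace dot circ) : ∀ σ : G, circ.mul σ dot.one = σ := by
  letI := dot
  intro σ
  have hb : ∀ σ τ κ : G,
      circ.mul σ (τ * κ) = circ.mul σ τ * σ⁻¹ * circ.mul σ κ := hsb
  have h := hb σ 1 1
  rw [one_mul] at h
  have h2 : (1 : G) * circ.mul σ 1 = circ.mul σ 1 * σ⁻¹ * circ.mul σ 1 := by
    rw [one_mul]; exact h
  have h3 := mul_right_cancel h2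
  exact mul_inv_eq_one.mp h3.symm

lemma one_eq (hsb : IsSkewBrace dot circ) : dot.one = circ.one := by
  have h1 : circ.mul circ.one dot.one = circ.one := circ_mul_one dot circ hsb circ.one
  have h2 : circ.mul circ.one dot.one = dot.one := grp_one_mul circ dot.one
  rw [h2] at h1; exact h1

lemma gamma_mul (hsb : IsSkewBrace dot circ) : ∀ σ τ κ : G, gammaFun dot circ σ (dot.mul τ κ) =
    dot.mul (gammaFun dot circ σ τ) (gammaFun dot circ σ κ) := by
  letI := dot
  intro σ τ κ
  have hb : ∀ σ τ κ : G,
      circ.mul σ (τ * κ) = circ.mul σ τ * σ⁻¹ * circ.mul σ κ := hsb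
  show σ⁻¹ * circ.mul σ (τ * κ) = (σ⁻¹ * circ.mul σ τ) * (σ⁻¹ * circ.mul σ κ)
  rw [hb σ τ κ]
  simp [mul_assoc]

lemma gamma_one (hsb : IsSkewBrace dot circ) : ∀ σ : G, gammaFun dot circ σ dot.one = dot.one := by
  letI := dot
  intro σ
  show σ⁻¹ * circ.mul σ dot.one = dot.one
  rw [circ_mul_one dot circ hsb σ]
  exact inv_mul_cancel σ

lemma gamma_circ_one (hsb : IsSkewBrace dot circ) : ∀ τ : G, gammaFun dot circ circ.one τ = τ := by
  letI := dot
  intro τ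
  show (circ.one)⁻¹ * circ.mul circ.one τ = τ
  rw [grp_one_mul circ τ, ← one_eq dot circ hsb]
  show (1 : G)⁻¹ * τ = τ
  simp

lemma gamma_gamma (hsb : IsSkewBrace dot circ) : ∀ σ τ κ : G, gammaFun dot circ σ (gammaFun dot circ τ κ) =
    gammaFun dot circ (circ.mul σ τ) κ := by
  letI := dot
  intro σ τ κ
  have hb : ∀ σ τ κ : G,
      circ.mul σ (τ * κ) = circ.mul σ τ * σ⁻¹ * circ.mul σ κ := hsb
  have hc1 : ∀ s : G, circ.mul s (1 : G) = s := circ_mul_one dot circ hsb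
  show σ⁻¹ * circ.mul σ (τ⁻¹ * circ.mul τ κ) =
    (circ.mul σ τ)⁻¹ * circ.mul (circ.mul σ τ) κ
  have h2 : circ.mul σ (circ.mul τ κ) = circ.mul (circ.mul σ τ) κ :=
    (grp_mul_assoc circ σ τ κ).symm
  have h4 := hb σ τ τ⁻¹
  rw [mul_inv_cancel, hc1] at h4
  -- h4 : σ = circ.mul σ τ * σ⁻¹ * circ.mul σ τ⁻¹
  have h3 : circ.mul σ τ⁻¹ = σ * (circ.mul σ τ)⁻¹ * σ := by
    have h6 : circ.mul σ τ * (σ⁻¹ * circ.mul σ τ⁻¹) = σ := by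
      rw [← mul_assoc]; exact h4.symm
    have h5 : σ⁻¹ * circ.mul σ τ⁻¹ = (circ.mul σ τ)⁻¹ * σ := eq_inv_mul_of_mul_eq h6
    calc circ.mul σ τ⁻¹ = σ * (σ⁻¹ * circ.mul σ τ⁻¹) := by rw [mul_inv_cancel_left]
      _ = σ * ((circ.mul σ τ)⁻¹ * σ) := by rw [h5]
      _ = σ * (circ.mul σ τ)⁻¹ * σ := by rw [mul_assoc]
  rw [hb σ τ⁻¹ (circ.mul τ κ), h2, h3]
  group

end Gamma

end SB18


/-- Auxiliary carrier for the semidirect product `(G,·) ⋊_γ (G,∘)`;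
a bespoke structure so that no ambient instances on products interfere. -/
structure SBPair (G : Type*) where
  a : G
  b : G

namespace SB18

def sbPairEquiv (G : Type*) : G × G ≃ SBPair G where
  toFun p := ⟨p.1, p.2⟩
  invFun x := (x.a, x.b)
  left_inv p := rfl
  right_inv x := rfl

end SB18

section Construct

variable {G : Type*}

lemma exists_block [Finite G] (dot circ : Group G) (hsb : IsSkewBrace dot circ)
    (p n k : ℕ) (hp : p.Prime) (hcard : Nat.card G = p ^ n) (hk : k ≤ n) :
    ∃ B : Set G, IsSubgroupOf circ B ∧ IsSubgroupOf dot B ∧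
      (∀ σ : G, ∀ τ ∈ B, gammaFun dot circ σ τ ∈ B) ∧ Nat.card B = p ^ k := by
  classical
  letI := dot
  haveI : Fact p.Prime := ⟨hp⟩
  haveI : Finite (SBPair G) := Finite.of_equiv _ (SB18.sbPairEquiv G)
  set γ := gammaFun dot circ with hγ
  have hγdef : ∀ σ τ : G, γ σ τ = σ⁻¹ * circ.mul σ τ := fun _ _ => rfl
  have hγmul : ∀ σ τ κ : G, γ σ (τ * κ) = γ σ τ * γ σ κ := SB18.gamma_mul dot circ hsb
  have hγγ : ∀ σ τ κ : G, γ σ (γ τ κ) = γ (circ.mul σ τ) κ := SB18.gamma_gamma dot circ hsb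
  have hγ1 : ∀ σ : G, γ σ (1 : G) = 1 := SB18.gamma_one dot circ hsb
  have hγc1 : ∀ τ : G, γ circ.one τ = τ := SB18.gamma_circ_one dot circ hsb
  -- group structure on SBPair G
  letI mulGG : Mul (SBPair G) := ⟨fun x y => ⟨x.a * γ x.b y.a, circ.mul x.b y.b⟩⟩
  letI oneGG : One (SBPair G) := ⟨⟨(1 : G), circ.one⟩⟩
  letI invGG : Inv (SBPair G) := ⟨fun x => ⟨γ (circ.inv x.b) (x.a⁻¹), circ.inv x.b⟩⟩
  have hmul : ∀ x y : SBPair G, x * y = ⟨x.a * γ x.b y.a, circ.mul x.b y.b⟩ := fun _ _ => rfl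
  have hone : (1 : SBPair G) = ⟨(1 : G), circ.one⟩ := rfl
  letI grpGG : Group (SBPair G) := Group.ofLeftAxioms
    (by
      intro x y z
      rw [hmul, hmul, hmul, hmul]
      show (⟨x.a * γ x.b y.a * γ (circ.mul x.b y.b) z.a,
          circ.mul (circ.mul x.b y.b) z.b⟩ : SBPair G)
        = ⟨x.a * γ x.b (y.a * γ y.b z.a), circ.mul x.b (circ.mul y.b z.b)⟩
      rw [hγmul, hγγ, mul_assoc, SB18.grp_mul_assoc circ])
    (by
      intro x
      rw [hone, hmul]
      show (⟨(1 : G) * γ circ.one x.a, circ.mul circ.one x.b⟩ : SBPair G) = x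
      rw [hγc1, one_mul, SB18.grp_one_mul circ])
    (by
      intro x
      rw [hmul]
      show (⟨γ (circ.inv x.b) (x.a⁻¹) * γ (circ.inv x.b) x.a,
          circ.mul (circ.inv x.b) x.b⟩ : SBPair G) = 1
      rw [← hγmul, inv_mul_cancel, hγ1, SB18.grp_inv_mul circ, hone])
  letI smulGG : SMul (SBPair G) G := ⟨fun x y => x.a * γ x.b y⟩
  have hsmul : ∀ (x : SBPair G) (y : G), x • y = x.a * γ x.b y := fun _ _ => rfl
  letI actGG : MulAction (SBPair G) G :=
    { one_smul := by
        intro y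
        rw [hsmul, hone]
        show (1 : G) * γ circ.one y = y
        rw [hγc1, one_mul]
      mul_smul := by
        intro x y t
        rw [hsmul, hsmul, hsmul, hmul]
        show x.a * γ x.b y.a * γ (circ.mul x.b y.b) t = x.a * γ x.b (y.a * γ y.b t)
        rw [hγmul, hγγ, mul_assoc] }
  -- cardinalities
  have hcardGG : Nat.card (SBPair G) = p ^ n * p ^ n := by
    rw [← Nat.card_congr (SB18.sbPairEquiv G), Nat.card_prod, hcard]
  -- the orbit of 1 under the full group is everything
  have horb : MulAction.orbit (SBPair G) (1 : G) = Set.univ := by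
    ext x
    simp only [Set.mem_univ, iff_true, MulAction.mem_orbit_iff]
    refine ⟨⟨x, circ.one⟩, ?_⟩
    rw [hsmul]
    show x * γ circ.one (1 : G) = x
    rw [hγc1, mul_one]
  set K := MulAction.stabilizer (SBPair G) (1 : G) with hK
  have hKindex : K.index = p ^ n := by
    rw [hK, MulAction.index_stabilizer, horb, Set.ncard_univ, hcard]
  have hKcard : Nat.card K = p ^ n := by
    have h1 := Subgroup.card_mul_index K
    rw [hKindex, hcardGG] at h1
    exact Nat.eq_of_mul_eq_mul_right (pow_pos hp.pos n) h1
  -- intermediate subgroup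
  have hdvd : p ^ (n + k) ∣ Nat.card (SBPair G) := by
    rw [hcardGG, ← pow_add]
    exact pow_dvd_pow p (by omega)
  obtain ⟨T, hTcard, hKT⟩ :=
    Sylow.exists_subgroup_card_pow_prime_le p hdvd K hKcard (by omega)
  -- the orbit of 1 under T
  set B := MulAction.orbit T (1 : G) with hB
  have hmemB : ∀ x : G, x ∈ B ↔ ∃ t : T, (t : SBPair G) • (1 : G) = x := by
    intro x
    rw [hB, MulAction.mem_orbit_iff]
    rfl
  have h1B : (1 : G) ∈ B := MulAction.mem_orbit_self _
  -- block property
  have hblock : ∀ s : SBPair G, ∀ b ∈ B, s • b ∈ B → s ∈ T := by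
    intro s b hb hsb'
    obtain ⟨t, ht⟩ := (hmemB b).mp hb
    obtain ⟨t', ht'⟩ := (hmemB (s • b)).mp hsb'
    have hk1 : ((t' : SBPair G)⁻¹ * s * (t : SBPair G)) • (1 : G) = 1 := by
      rw [mul_smul, mul_smul, ht, inv_smul_eq_iff, ht']
    have hmem : (t' : SBPair G)⁻¹ * s * (t : SBPair G) ∈ K := hk1
    have hmemT : (t' : SBPair G)⁻¹ * s * (t : SBPair G) ∈ T := hKT hmem
    have heq : (t' : SBPair G) * ((t' : SBPair G)⁻¹ * s * (t : SBPair G)) * (t : SBPair G)⁻¹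
        = s := by group
    rw [← heq]
    exact T.mul_mem (T.mul_mem t'.2 hmemT) (T.inv_mem t.2)
  -- T-stability of B
  have hstable : ∀ s ∈ T, ∀ b ∈ B, s • b ∈ B := by
    intro s hs b hb
    obtain ⟨t, ht⟩ := (hmemB b).mp hb
    refine (hmemB _).mpr ⟨⟨s, hs⟩ * t, ?_⟩
    push_cast
    rw [mul_smul, ht]
  -- membership of key elements in T
  have hdotsmul : ∀ x y : G, (⟨x, circ.one⟩ : SBPair G) • y = x * y := by
    intro x y; rw [hsmul]
    show x * γ circ.one y = x * y
    rw [hγc1]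
  have hcircsmul : ∀ x y : G, (⟨x, x⟩ : SBPair G) • y = circ.mul x y := by
    intro x y; rw [hsmul, hγdef]
    exact mul_inv_cancel_left x _
  have hdotT : ∀ x ∈ B, (⟨x, circ.one⟩ : SBPair G) ∈ T := by
    intro x hx
    refine hblock _ _ h1B ?_
    rw [hdotsmul, mul_one]; exact hx
  have hcircT : ∀ x ∈ B, (⟨x, x⟩ : SBPair G) ∈ T := by
    intro x hx
    refine hblock _ _ h1B ?_
    rw [hsmul]
    show x * γ x (1 : G) ∈ B
    rw [hγ1, mul_one]; exact hx
  have hgamT : ∀ σ : G, (⟨(1 : G), σ⟩ : SBPair G) ∈ T := by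
    intro σ
    refine hblock _ _ h1B ?_
    rw [hsmul]
    show (1 : G) * γ σ (1 : G) ∈ B
    rw [hγ1, mul_one]; exact h1B
  -- B is a subgroup of circ
  have honeB : circ.one ∈ B := by rw [← SB18.one_eq dot circ hsb]; exact h1B
  have hcmulB : ∀ a ∈ B, ∀ b ∈ B, circ.mul a b ∈ B := by
    intro a ha b hb
    rw [← hcircsmul a b]
    exact hstable _ (hcircT a ha) b hb
  have hcinvB : ∀ a ∈ B, circ.inv a ∈ B := by
    intro a ha
    have hu : (⟨a, a⟩ : SBPair G) ∈ T := hcircT a ha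
    have hw : ((⟨a, a⟩ : SBPair G)⁻¹) • (1 : G) ∈ B := hstable _ (T.inv_mem hu) _ h1B
    have h1 : (⟨a, a⟩ : SBPair G) • (((⟨a, a⟩ : SBPair G)⁻¹) • (1 : G)) = 1 := smul_inv_smul _ _
    rw [hcircsmul] at h1
    have h2 : circ.mul a (((⟨a, a⟩ : SBPair G)⁻¹) • (1 : G)) = circ.one := by
      rw [h1]; exact SB18.one_eq dot circ hsb
    rw [SB18.grp_inv_of circ a _ h2]
    exact hw
  -- B is a subgroup of dot
  have hdmulB : ∀ x ∈ B, ∀ y ∈ B, dot.mul x y ∈ B := by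
    intro x hx y hy
    have : dot.mul x y = x * y := rfl
    rw [this, ← hdotsmul x y]
    exact hstable _ (hdotT x hx) y hy
  have hdinvB : ∀ x ∈ B, dot.inv x ∈ B := by
    intro x hx
    have hu : (⟨x, circ.one⟩ : SBPair G) ∈ T := hdotT x hx
    have hw : ((⟨x, circ.one⟩ : SBPair G)⁻¹) • (1 : G) ∈ B := hstable _ (T.inv_mem hu) _ h1B
    have h1 : (⟨x, circ.one⟩ : SBPair G) • (((⟨x, circ.one⟩ : SBPair G)⁻¹) • (1 : G)) = 1 :=
      smul_inv_smul _ _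
    rw [hdotsmul] at h1
    have h2 : dot.inv x = ((⟨x, circ.one⟩ : SBPair G)⁻¹) • (1 : G) := by
      show x⁻¹ = _
      exact inv_eq_of_mul_eq_one_right h1
    rw [h2]
    exact hw
  -- gamma stability
  have hgamB : ∀ σ : G, ∀ τ ∈ B, γ σ τ ∈ B := by
    intro σ τ hτ
    have h1 : (⟨(1 : G), σ⟩ : SBPair G) • τ = γ σ τ := by rw [hsmul, one_mul]
    rw [← h1]
    exact hstable _ (hgamT σ) τ hτ
  -- cardinality of B
  have hstabT : MulAction.stabilizer T (1 : G) = K.subgroupOf T := by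
    ext t
    simp only [MulAction.mem_stabilizer_iff, Subgroup.mem_subgroupOf, hK]
    rw [Subgroup.smul_def]
  have hstabcard : Nat.card (MulAction.stabilizer T (1 : G)) = p ^ n := by
    rw [hstabT, ← hKcard]
    exact Nat.card_congr (Subgroup.subgroupOfEquivOfLe hKT).toEquiv
  have hBcard : Nat.card B = p ^ k := by
    have h1 : (MulAction.stabilizer T (1 : G)).index = (MulAction.orbit T (1 : G)).ncard :=
      MulAction.index_stabilizer T (1 : G)
    have h2 := Subgroup.card_mul_index (MulAction.stabilizer T (1 : G))
    rw [hstabcard, h1, hTcard] at h2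
    have h3 : (MulAction.orbit T (1 : G)).ncard = p ^ k := by
      have hpk : p ^ n * p ^ k = p ^ (n + k) := by rw [← pow_add]
      rw [← hpk] at h2
      exact Nat.eq_of_mul_eq_mul_left (pow_pos hp.pos n) h2
    rw [Nat.card_coe_set_eq, hB, h3]
  exact ⟨B, ⟨honeB, hcmulB, hcinvB⟩, ⟨h1B, hdmulB, hdinvB⟩, hgamB, hBcard⟩

end Construct


namespace SB18

variable {G : Type*}

def toSubgroup (S : Group G) (H : Set G) (h : IsSubgroupOf S H) : @Subgroup G S :=
  letI := S
  { carrier := H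
    mul_mem' := fun ha hb => h.2.1 _ ha _ hb
    one_mem' := h.1
    inv_mem' := fun ha => h.2.2 _ ha }

lemma card_dvd [Finite G] (S : Group G) (H : Set G) (h : IsSubgroupOf S H) :
    Nat.card H ∣ Nat.card G := by
  letI := S
  have h1 := Subgroup.card_subgroup_dvd_card (toSubgroup S H h)
  exact h1

lemma subgroup_unique [Finite G] (S : Group G)
    (hcyc : ∃ g : G, ∀ x : G, ∃ k : ℤ, x = S.zpow k g)
    (H B : Set G) (hH : IsSubgroupOf S H) (hB : IsSubgroupOf S B)
    (hc : Nat.card H = Nat.card B) : H = B := by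
  classical
  letI := S
  letI : Fintype G := Fintype.ofFinite G
  haveI : IsCyclic G := by
    obtain ⟨g, hg⟩ := hcyc
    refine ⟨g, fun x => ?_⟩
    obtain ⟨k, hk⟩ := hg x
    exact ⟨k, hk.symm⟩
  have hsub : ∀ (C : Set G), IsSubgroupOf S C → C ⊆ {x : G | x ^ Nat.card C = 1} := by
    intro C hC x hx
    have hx' : (⟨x, hx⟩ : toSubgroup S C hC) ^ Nat.card (toSubgroup S C hC) = 1 :=
      pow_card_eq_one'
    have h2 : x ^ Nat.card (toSubgroup S C hC) = 1 := by
      have := congrArg (Subtype.val) hx'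
      rwa [SubmonoidClass.coe_pow] at this
    exact h2
  have hcount : ∀ j : ℕ, 0 < j → Nat.card {x : G | x ^ j = 1} ≤ j := by
    intro j hj
    have h1 : Nat.card {x : G | x ^ j = 1} = ({x : G | x ^ j = 1}).toFinset.card := by
      rw [Nat.card_coe_set_eq, Set.ncard_eq_toFinset_card']
    rw [h1]
    have h2 := IsCyclic.card_pow_eq_one_le (α := G) hj
    convert h2 using 2
    simp [Set.toFinset_setOf]
  have hpos : 0 < Nat.card H := by
    have : Nonempty H := ⟨⟨S.one, hH.1⟩⟩
    exact Nat.card_pos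
  have hZH : H = {x : G | x ^ Nat.card H = 1} := by
    refine Set.eq_of_subset_of_ncard_le (hsub H hH) ?_ (Set.toFinite _)
    rw [← Nat.card_coe_set_eq, ← Nat.card_coe_set_eq]
    exact hcount _ hpos
  have hZB : B = {x : G | x ^ Nat.card H = 1} := by
    have hB' := hsub B hB
    rw [← hc] at hB'
    refine Set.eq_of_subset_of_ncard_le hB' ?_ (Set.toFinite _)
    rw [← Nat.card_coe_set_eq, ← Nat.card_coe_set_eq]
    exact le_trans (hcount _ hpos) (le_of_eq hc)
  rw [hZH, ← hZB]

end SB18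

/-- If `(G,∘)` is cyclic of odd prime power order `p^n`, `n ≥ 1`, then for
every skew brace `(G,·,∘)`, every subgroup of `(G,∘)` is a left ideal of `(G,·,∘)`. -/
theorem stmt18 {G : Type*} [Finite G] (circ : Group G) (p n : ℕ)
    (hp : p.Prime) (hodd : Odd p) (hn : 1 ≤ n) (hcard : Nat.card G = p ^ n)
    (hcyc : ∃ g : G, ∀ x : G, ∃ k : ℤ, x = circ.zpow k g) :
    ∀ dot : Group G, IsSkewBrace dot circ →
      ∀ H : Set G, IsSubgroupOf circ H → IsLeftIdeal dot circ H := by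
  intro dot hsb H hH
  have hdvd : Nat.card H ∣ p ^ n := by
    rw [← hcard]; exact SB18.card_dvd circ H hH
  obtain ⟨k, hkn, hkcard⟩ := (Nat.dvd_prime_pow hp).mp hdvd
  obtain ⟨B, hBc, hBd, hBg, hBcard⟩ := exists_block dot circ hsb p n k hp hcard hkn
  have hHB : H = B :=
    SB18.subgroup_unique circ hcyc H B hH hBc (by rw [hkcard, hBcard])
  rw [hHB]
  exact ⟨hBd, hBg⟩
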